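/- Let R, α, β be real numbers with α ≠ 0 and β ≠ 0, and suppose α²β⁴ ≥ (4/27)R³. Then for every s > 0 one has β²s¹² − R s⁸ + α² ≥ 0. Moreover, there exists s > 0 with β²s¹² − R s⁸ + α² = 0 if and only if R > 0, α²β⁴ = (4/27)R³, and in that case the unique such s equals (2R/(3β²))^(1/4). -/

import Mathlib

/-- sign analysis of the polynomial `s ↦ β²s¹² − R s⁸ + α²`
(algebraic core of Proposition 2.1). -/
theorem stmt_0 (R α β : ℝ) (hα : α ≠ 0) (hβ : β ≠ 0)
    (h : α ^ 2 * β ^ 4 ≥ (4 / 27) * R ^ 3) :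
    (∀ s : ℝ, 0 < s → β ^ 2 * s ^ 12 - R * s ^ 8 + α ^ 2 ≥ 0) ∧
    ((∃ s : ℝ, 0 < s ∧ β ^ 2 * s ^ 12 - R * s ^ 8 + α ^ 2 = 0) ↔
      (0 < R ∧ α ^ 2 * β ^ 4 = (4 / 27) * R ^ 3)) ∧
    (∀ s : ℝ, 0 < s → β ^ 2 * s ^ 12 - R * s ^ 8 + α ^ 2 = 0 →
      s = (2 * R / (3 * β ^ 2)) ^ ((1 : ℝ) / 4)) := by
  have hα2 : 0 < α ^ 2 := by positivity
  have hβ2 : 0 < β ^ 2 := by positivity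
  -- Main analysis for a root
  have main : ∀ s : ℝ, 0 < s → β ^ 2 * s ^ 12 - R * s ^ 8 + α ^ 2 = 0 →
      0 < R ∧ α ^ 2 * β ^ 4 = (4 / 27) * R ^ 3 ∧
        s = (2 * R / (3 * β ^ 2)) ^ ((1 : ℝ) / 4) := by
    intro s hs heq
    have hs4 : 0 < s ^ 4 := by positivity
    have hR : 0 < R := by
      by_contra hR
      push_neg at hR
      nlinarith [pow_pos hs 8, pow_pos hs 12]
    -- identity: 27β⁴ f(s) = (3β²s⁴−2R)²(3β²s⁴+R) + 27α²β⁴ − 4R³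
    have hid : (3 * β ^ 2 * s ^ 4 - 2 * R) ^ 2 * (3 * β ^ 2 * s ^ 4 + R)
        + (27 * α ^ 2 * β ^ 4 - 4 * R ^ 3)
        = 27 * β ^ 4 * (β ^ 2 * s ^ 12 - R * s ^ 8 + α ^ 2) := by ring
    rw [heq, mul_zero] at hid
    have hpos : 0 < 3 * β ^ 2 * s ^ 4 + R := by positivity
    have h1 : 0 ≤ 27 * α ^ 2 * β ^ 4 - 4 * R ^ 3 := by nlinarith
    have h2 : 0 ≤ (3 * β ^ 2 * s ^ 4 - 2 * R) ^ 2 * (3 * β ^ 2 * s ^ 4 + R) :=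
      mul_nonneg (sq_nonneg _) hpos.le
    have heq2 : α ^ 2 * β ^ 4 = (4 / 27) * R ^ 3 := by nlinarith
    have hz : (3 * β ^ 2 * s ^ 4 - 2 * R) ^ 2 * (3 * β ^ 2 * s ^ 4 + R) = 0 := by
      nlinarith
    have hsq : (3 * β ^ 2 * s ^ 4 - 2 * R) ^ 2 = 0 :=
      (mul_eq_zero.mp hz).resolve_right (ne_of_gt hpos)
    have hsol : s ^ 4 = 2 * R / (3 * β ^ 2) := by
      have h3 : 3 * β ^ 2 * s ^ 4 - 2 * R = 0 := by
        exact pow_eq_zero_iff (n := 2) (by norm_num) |>.mp hsq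
      field_simp
      linarith
    refine ⟨hR, heq2, ?_⟩
    have : (2 * R / (3 * β ^ 2)) ^ ((1 : ℝ) / 4) = s := by
      rw [← hsol, ← Real.rpow_natCast s 4, ← Real.rpow_mul hs.le]
      norm_num
    exact this.symm
  refine ⟨?_, ⟨?_, ?_⟩, fun s hs heq => (main s hs heq).2.2⟩
  · intro s hs
    rcases le_or_gt R 0 with hR | hR
    · nlinarith [pow_pos hs 8, pow_pos hs 12]
    · nlinarith [mul_nonneg (sq_nonneg (3 * β ^ 2 * s ^ 4 - 2 * R))
        (by positivity : (0:ℝ) ≤ 3 * β ^ 2 * s ^ 4 + R),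
        (by positivity : (0:ℝ) < β ^ 4), h]
  · rintro ⟨s, hs, heq⟩
    exact ⟨(main s hs heq).1, (main s hs heq).2.1⟩
  · rintro ⟨hR, heq⟩
    refine ⟨(2 * R / (3 * β ^ 2)) ^ ((1 : ℝ) / 4), ?_, ?_⟩
    · exact Real.rpow_pos_of_pos (by positivity) _
    · set c := 2 * R / (3 * β ^ 2) with hc
      have hcpos : 0 < c := by positivity
      have hs4 : ((c : ℝ) ^ ((1 : ℝ) / 4)) ^ (4 : ℕ) = c := by
        rw [← Real.rpow_natCast (c ^ ((1:ℝ)/4)) 4, ← Real.rpow_mul hcpos.le]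
        norm_num
      have h12 : ((c : ℝ) ^ ((1 : ℝ) / 4)) ^ 12 = c ^ 3 := by
        rw [show (12 : ℕ) = 4 * 3 by norm_num, pow_mul, hs4]
      have h8 : ((c : ℝ) ^ ((1 : ℝ) / 4)) ^ 8 = c ^ 2 := by
        rw [show (8 : ℕ) = 4 * 2 by norm_num, pow_mul, hs4]
      rw [h12, h8, hc]
      field_simp
      linear_combination 27 * heq
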